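/- For every polynomial f in ℂ[x,y] and every natural number k, the following two identities hold in the endomorphism algebra of ℂ[X]: Φ(f) ∘ M^k = Σ_{α=0}^{k} (k choose α) • M^α ∘ Φ(∂_y^{k−α} f), and D^k ∘ Φ(f) = Σ_{α=0}^{k} (k choose α) • Φ(∂_x^{k−α} f) ∘ D^α, where ∂^j denotes the j-th iterate of the partial derivative. -/

import Mathlib

open Polynomial MvPolynomial

/-- Multiplication by X on ℂ[X]. -/
noncomputable def M : Module.End ℂ (Polynomial ℂ) := LinearMap.mulLeft ℂ Polynomial.X

/-- Formal derivative on ℂ[X]. -/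
noncomputable def D : Module.End ℂ (Polynomial ℂ) := Polynomial.derivative

/-- Normal-ordering map: extends x^p·y^q ↦ M^p ∘ D^q by ℂ-linearity. -/
noncomputable def Φ (f : MvPolynomial (Fin 2) ℂ) : Module.End ℂ (Polynomial ℂ) :=
  ∑ d ∈ f.support, f.coeff d • (M ^ d 0 * D ^ d 1)


noncomputable def Φₗ : MvPolynomial (Fin 2) ℂ →ₗ[ℂ] Module.End ℂ (Polynomial ℂ) :=
  (Finsupp.lsum ℂ fun (d : Fin 2 →₀ ℕ) => LinearMap.toSpanSingleton ℂ _ (M ^ d 0 * D ^ d 1)) ∘ₗ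
    (AddMonoidAlgebra.coeffLinearEquiv ℂ).toLinearMap

lemma Phi_eq (f : MvPolynomial (Fin 2) ℂ) : Φ f = Φₗ f := rfl

lemma Phi_monomial (d : Fin 2 →₀ ℕ) (c : ℂ) :
    Φ (monomial d c) = c • (M ^ d 0 * D ^ d 1) := by
  unfold Φ
  rcases eq_or_ne c 0 with hc | hc
  · simp [hc, MvPolynomial.support_monomial]
  · simp [MvPolynomial.support_monomial, hc, MvPolynomial.coeff_monomial]

lemma Phi_add (f g : MvPolynomial (Fin 2) ℂ) : Φ (f + g) = Φ f + Φ g := by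
  simp [Phi_eq]

lemma Phi_zero : Φ 0 = 0 := by simp [Phi_eq]

lemma D_mul_M : D * M = M * D + 1 := by
  apply LinearMap.ext; intro p
  simp only [D, M, Module.End.mul_apply, LinearMap.add_apply, Module.End.one_apply,
    LinearMap.mulLeft_apply, Polynomial.derivative_mul, Polynomial.derivative_X, one_mul]
  ring

lemma Dpow_M (q : ℕ) : D ^ (q + 1) * M = M * D ^ (q + 1) + (q + 1) • D ^ q := by
  induction q with
  | zero => simpa using D_mul_M
  | succ q ih =>
    have : D ^ (q + 2) * M = D * (D ^ (q + 1) * M) := by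
      rw [← mul_assoc, ← pow_succ']
    rw [this, ih, mul_add, ← mul_assoc, D_mul_M, add_mul, one_mul, mul_assoc, ← pow_succ',
      mul_smul_comm, ← pow_succ', succ_nsmul]
    module

lemma D_Mpow (p : ℕ) : D * M ^ (p + 1) = M ^ (p + 1) * D + (p + 1) • M ^ p := by
  induction p with
  | zero => simpa using D_mul_M
  | succ p ih =>
    have : D * M ^ (p + 2) = (D * M ^ (p + 1)) * M := by
      rw [mul_assoc, ← pow_succ]
    rw [this, ih, add_mul, mul_assoc, D_mul_M, mul_add, mul_one, ← mul_assoc, ← pow_succ,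
      smul_mul_assoc, ← pow_succ, succ_nsmul]
    module

lemma Phi_mul_M (f : MvPolynomial (Fin 2) ℂ) :
    Φ f * M = M * Φ f + Φ ((pderiv (1 : Fin 2)) f) := by
  induction f using MvPolynomial.induction_on' with
  | add p q hp hq => rw [map_add, Phi_add, Phi_add, add_mul, mul_add, hp, hq]; abel
  | monomial d c =>
    rw [Phi_monomial, pderiv_monomial, Phi_monomial]
    cases hq : d 1 with
    | zero =>
      have : M ^ d 0 * D ^ 0 * M = M * (M ^ d 0 * D ^ 0) := by
        simp [← pow_succ, ← pow_succ']
      simp only [hq, pow_zero, mul_one, Finsupp.coe_tsub, Nat.cast_zero, mul_zero, zero_smul,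
        add_zero, smul_mul_assoc, mul_smul_comm]
      rw [← pow_succ, ← pow_succ']
    | succ q =>
      have h0 : ((d - Finsupp.single 1 1 : Fin 2 →₀ ℕ)) (0 : Fin 2) = d 0 := by
        rw [Finsupp.tsub_apply]; simp [Finsupp.single_apply]
      have h1 : ((d - Finsupp.single 1 1 : Fin 2 →₀ ℕ)) (1 : Fin 2) = q := by
        rw [Finsupp.tsub_apply]; simp [Finsupp.single_apply]; omega
      have e : M ^ d 0 * (M * D ^ (q + 1)) = M * (M ^ d 0 * D ^ (q + 1)) := by
        rw [← mul_assoc, ← mul_assoc, ← pow_succ, ← pow_succ']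
      rw [h0, h1, smul_mul_assoc, mul_assoc, Dpow_M, mul_add, e]
      simp only [mul_smul_comm, smul_mul_assoc]
      push_cast
      module

lemma D_mul_Phi (f : MvPolynomial (Fin 2) ℂ) :
    D * Φ f = Φ f * D + Φ ((pderiv (0 : Fin 2)) f) := by
  induction f using MvPolynomial.induction_on' with
  | add p q hp hq => rw [map_add, Phi_add, Phi_add, add_mul, mul_add, hp, hq]; abel
  | monomial d c =>
    rw [Phi_monomial, pderiv_monomial, Phi_monomial]
    cases hp : d 0 with
    | zero =>
      have : D * (M ^ 0 * D ^ d 1) = M ^ 0 * D ^ d 1 * D := by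
        simp [← pow_succ, ← pow_succ']
      simp only [hp, pow_zero, one_mul, Nat.cast_zero, mul_zero, zero_smul, add_zero,
        smul_mul_assoc, mul_smul_comm]
      rw [← pow_succ', ← pow_succ]
    | succ p =>
      have h0 : ((d - Finsupp.single 0 1 : Fin 2 →₀ ℕ)) (0 : Fin 2) = p := by
        rw [Finsupp.tsub_apply]; simp [Finsupp.single_apply]; omega
      have h1 : ((d - Finsupp.single 0 1 : Fin 2 →₀ ℕ)) (1 : Fin 2) = d 1 := by
        rw [Finsupp.tsub_apply]; simp [Finsupp.single_apply]
      have e : M ^ (p + 1) * D * D ^ d 1 = M ^ (p + 1) * D ^ d 1 * D := by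
        rw [mul_assoc, mul_assoc, ← pow_succ, ← pow_succ']
      rw [h0, h1, mul_smul_comm, ← mul_assoc, D_Mpow, add_mul, e, smul_mul_assoc]
      simp only [mul_smul_comm, smul_mul_assoc]
      push_cast
      module

lemma key {A : Type*} [Ring A] (m : A) (g : ℕ → A)
    (h : ∀ n, g n * m = m * g n + g (n + 1)) (k : ℕ) :
    g 0 * m ^ k = ∑ α ∈ Finset.range (k + 1), k.choose α • (m ^ α * g (k - α)) := by
  induction k with
  | zero => simp
  | succ k ih =>
    have e1 : ∀ α ∈ Finset.range (k + 1),
        k.choose α • (m ^ α * g (k - α)) * m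
          = k.choose α • (m ^ (α + 1) * g (k - α)) + k.choose α • (m ^ α * g (k + 1 - α)) := by
      intro α hα
      rw [Finset.mem_range] at hα
      have hα' : k - α + 1 = k + 1 - α := by omega
      rw [smul_mul_assoc, mul_assoc, h, mul_add, smul_add, ← mul_assoc, ← pow_succ, hα']
    have e2 : ∑ α ∈ Finset.range (k + 2), (k + 1).choose α • (m ^ α * g (k + 1 - α))
        = (∑ α ∈ Finset.range (k + 1), k.choose α • (m ^ (α + 1) * g (k - α)))
          + ∑ α ∈ Finset.range (k + 1), k.choose α • (m ^ α * g (k + 1 - α)) := by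
      rw [Finset.sum_range_succ' _ (k + 1)]
      have e3 : ∀ α ∈ Finset.range (k + 1),
          (k + 1).choose (α + 1) • (m ^ (α + 1) * g (k + 1 - (α + 1)))
            = k.choose α • (m ^ (α + 1) * g (k - α))
              + k.choose (α + 1) • (m ^ (α + 1) * g (k - α)) := by
        intro α hα
        rw [Nat.choose_succ_succ, add_smul, Nat.succ_sub_succ]
      rw [Finset.sum_congr rfl e3, Finset.sum_add_distrib]
      have e4 : ∑ α ∈ Finset.range (k + 1), k.choose (α + 1) • (m ^ (α + 1) * g (k - α))
          = ∑ α ∈ Finset.range k, k.choose (α + 1) • (m ^ (α + 1) * g (k - α)) := by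
        rw [Finset.sum_range_succ]
        simp
      have e5 : ∑ α ∈ Finset.range (k + 1), k.choose α • (m ^ α * g (k + 1 - α))
          = (∑ α ∈ Finset.range k, k.choose (α + 1) • (m ^ (α + 1) * g (k - α)))
            + k.choose 0 • (m ^ 0 * g (k + 1)) := by
        rw [Finset.sum_range_succ' _ k]
        congr 1
        refine Finset.sum_congr rfl fun α hα => ?_
        rw [Finset.mem_range] at hα
        have : k + 1 - (α + 1) = k - α := by omega
        rw [this]
      rw [e4, e5]
      simp
      abel
    rw [pow_succ, ← mul_assoc, ih, Finset.sum_mul, Finset.sum_congr rfl e1,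
      Finset.sum_add_distrib, e2]

lemma key' {A : Type*} [Ring A] (m : A) (g : ℕ → A)
    (h : ∀ n, m * g n = g n * m + g (n + 1)) (k : ℕ) :
    m ^ k * g 0 = ∑ α ∈ Finset.range (k + 1), k.choose α • (g (k - α) * m ^ α) := by
  have := key (A := Aᵐᵒᵖ) (MulOpposite.op m) (fun n => MulOpposite.op (g n))
    (fun n => by
      rw [← MulOpposite.op_mul, ← MulOpposite.op_mul, ← MulOpposite.op_add, h n]) k
  apply_fun MulOpposite.unop at this
  simp at this
  rw [this]
  refine Finset.sum_congr rfl fun α _ => ?_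
  rw [nsmul_eq_mul, (Nat.cast_commute (k.choose α) _).eq]

/-- Formulas (1.5): transposition of Φ(f) with powers of the generators. -/
theorem heisenberg_transposition (f : MvPolynomial (Fin 2) ℂ) (k : ℕ) :
    Φ f * M ^ k =
      ∑ α ∈ Finset.range (k + 1),
        k.choose α • (M ^ α * Φ ((⇑(pderiv (1 : Fin 2)))^[k - α] f)) ∧
    D ^ k * Φ f =
      ∑ α ∈ Finset.range (k + 1),
        k.choose α • (Φ ((⇑(pderiv (0 : Fin 2)))^[k - α] f) * D ^ α) := by
  constructor
  · have h1 := key M (fun n => Φ ((⇑(pderiv (1 : Fin 2)))^[n] f)) (fun n => by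
      rw [Function.iterate_succ_apply']; exact Phi_mul_M _) k
    simpa using h1
  · have h2 := key' D (fun n => Φ ((⇑(pderiv (0 : Fin 2)))^[n] f)) (fun n => by
      rw [Function.iterate_succ_apply']; exact D_mul_Phi _) k
    simpa using h2
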